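/- Let Ĝ be a finite simple graph on nonempty vertex set V̂ with vertex weights w : V̂ → ℕ⁺ and guard-band size GB ∈ ℕ. Then the optimal MUFI satisfies |opt(Ĝ)| ≥ (χ(Ĝ) − 1)·GB + Σ_{i=1}^{χ(Ĝ)} ŵ_{D(i)}, where χ(Ĝ) is the chromatic number of Ĝ and ŵ_{D(1)} ≤ ŵ_{D(2)} ≤ … are the vertex weights listed in nondecreasing order (so the sum is over the χ(Ĝ) smallest vertex weights). -/

import Mathlib

/-- A proper spectrum assignment: each vertex `v` receives the interval of `w v`
consecutive positive integers starting at `b v`, and for every edge the two intervals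
are at distance at least `GB`. -/
def IsProperAssign {V : Type*} (G : SimpleGraph V) (w : V → ℕ) (GB : ℕ) (b : V → ℕ) : Prop :=
  (∀ v, 1 ≤ b v) ∧
  ∀ u v : V, G.Adj u v →
    ∀ s ∈ Finset.Icc (b u) (b u + w u - 1), ∀ t ∈ Finset.Icc (b v) (b v + w v - 1),
      (GB : ℤ) ≤ |(s : ℤ) - (t : ℤ)| - 1

/-- The maximum used frequency-slot index of an assignment. -/
def MUFI {V : Type*} [Fintype V] (w b : V → ℕ) : ℕ :=
  Finset.univ.sup fun v => b v + w v - 1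

/-- The optimal MUFI: the minimum MUFI over all proper spectrum assignments. -/
noncomputable def optMUFI {V : Type*} [Fintype V] (G : SimpleGraph V) (w : V → ℕ)
    (GB : ℕ) : ℕ :=
  sInf {m : ℕ | ∃ b : V → ℕ, IsProperAssign G w GB b ∧ MUFI w b = m}

/-! ### Auxiliary machinery -/

/-- The height of a vertex in the interval order induced by an assignment:
`1` plus the maximal height of a vertex whose (guard-band-extended) interval lies
entirely to the left. -/
noncomputable def height {V : Type*} [Fintype V] (w b : V → ℕ) (GB : ℕ)
    (hw : ∀ v, 1 ≤ w v) : V → ℕ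
  | v =>
    ((Finset.univ.filter (fun u => b u + w u + GB ≤ b v)).attach.sup
      (fun u => height w b GB hw u.1)) + 1
  termination_by v => b v
  decreasing_by
    have h1 := (Finset.mem_filter.mp u.2).2
    have h2 := hw u.1
    show b u.1 < b v
    omega

lemma height_eq {V : Type*} [Fintype V] (w b : V → ℕ) (GB : ℕ) (hw : ∀ v, 1 ≤ w v) (v : V) :
    height w b GB hw v =
      ((Finset.univ.filter (fun u => b u + w u + GB ≤ b v)).attach.sup
        (fun u => height w b GB hw u.1)) + 1 := by
  rw [height]

lemma height_pos {V : Type*} [Fintype V] (w b : V → ℕ) (GB : ℕ) (hw : ∀ v, 1 ≤ w v) (v : V) :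
    1 ≤ height w b GB hw v := by
  rw [height_eq]; omega

lemma height_lt {V : Type*} [Fintype V] (w b : V → ℕ) (GB : ℕ) (hw : ∀ v, 1 ≤ w v)
    {u v : V} (h : b u + w u + GB ≤ b v) :
    height w b GB hw u < height w b GB hw v := by
  rw [height_eq w b GB hw v]
  have hm : (⟨u, Finset.mem_filter.mpr ⟨Finset.mem_univ u, h⟩⟩ :
      {x // x ∈ Finset.univ.filter (fun u => b u + w u + GB ≤ b v)}) ∈
      (Finset.univ.filter (fun u => b u + w u + GB ≤ b v)).attach := Finset.mem_attach _ _
  exact Nat.lt_succ_of_le (Finset.le_sup (f := fun x => height w b GB hw x.1) hm)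

lemma height_chain {V : Type*} [Fintype V] (w b : V → ℕ) (GB : ℕ) (hw : ∀ v, 1 ≤ w v)
    (hb : ∀ v, 1 ≤ b v) :
    ∀ v : V, ∃ C : Finset V, (∀ x ∈ C, b x ≤ b v) ∧ C.card = height w b GB hw v ∧
      C.sum w + (C.card - 1) * GB ≤ b v + w v - 1 := by
  suffices H : ∀ n : ℕ, ∀ v : V, b v = n → ∃ C : Finset V,
      (∀ x ∈ C, b x ≤ b v) ∧ C.card = height w b GB hw v ∧
      C.sum w + (C.card - 1) * GB ≤ b v + w v - 1 by
    exact fun v => H (b v) v rfl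
  intro n
  induction n using Nat.strong_induction_on with
  | _ n ih =>
    intro v hv
    classical
    by_cases hF : (Finset.univ.filter (fun u => b u + w u + GB ≤ b v)).Nonempty
    · obtain ⟨u0, _, hmax⟩ := Finset.exists_mem_eq_sup
        (Finset.univ.filter (fun u => b u + w u + GB ≤ b v)).attach
        (Finset.attach_nonempty_iff.mpr hF) (fun x => height w b GB hw x.1)
      have hu : b u0.1 + w u0.1 + GB ≤ b v := (Finset.mem_filter.mp u0.2).2
      have hblt : b u0.1 < b v := by have := hw u0.1; omega
      obtain ⟨C, hCle, hCcard, hCsum⟩ := ih (b u0.1) (hv ▸ hblt) u0.1 rfl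
      have hvC : v ∉ C := fun hv' => by have := hCle v hv'; omega
      have hhv : height w b GB hw v = height w b GB hw u0.1 + 1 := by
        rw [height_eq, hmax]
      refine ⟨insert v C, ?_, ?_, ?_⟩
      · intro x hx
        rcases Finset.mem_insert.mp hx with rfl | hx
        · exact le_rfl
        · exact le_of_lt (lt_of_le_of_lt (hCle x hx) hblt)
      · rw [Finset.card_insert_of_notMem hvC, hCcard, hhv]
      · rw [Finset.sum_insert hvC, Finset.card_insert_of_notMem hvC]
        have hc1 : 1 ≤ C.card := hCcard ▸ height_pos w b GB hw u0.1
        obtain ⟨c, hc⟩ := Nat.exists_eq_succ_of_ne_zero (by omega : C.card ≠ 0)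
        have hmul : C.card * GB = (C.card - 1) * GB + GB := by
          rw [hc]; simp [Nat.succ_mul]
        have hCsum' : (∑ x ∈ C, w x) + (C.card - 1) * GB ≤ b u0.1 + w u0.1 - 1 := hCsum
        simp only [Nat.add_sub_cancel]
        have hb1 := hb u0.1
        have hw1 := hw u0.1
        have hw2 := hw v
        omega
    · refine ⟨{v}, by simp, ?_, ?_⟩
      · rw [Finset.card_singleton, height_eq,
          Finset.not_nonempty_iff_eq_empty.mp hF]
        simp
      · have := hb v
        have := hw v
        simp only [Finset.card_singleton, Finset.sum_singleton]
        omega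

lemma take_sum_le_of_sublist : ∀ {l' l : List ℕ}, List.Sublist l' l → l.Pairwise (· ≤ ·) →
    (l.take l'.length).sum ≤ l'.sum := by
  intro l' l h
  induction h with
  | slnil => simp
  | cons a h ih =>
    rename_i l₁ l₂
    intro hs
    have ihh := ih hs.of_cons
    cases hl : l₁.length with
    | zero => simp [hl]
    | succ m =>
      have hml : m < l₂.length := by have := h.length_le; omega
      rw [List.take_succ_cons]
      have h1 : (l₂.take (m + 1)).sum = (l₂.take m).sum + l₂[m] :=
        List.sum_take_succ _ m hml
      have ha : a ≤ l₂[m] :=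
        (List.pairwise_cons.mp hs).1 _ (List.getElem_mem hml)
      rw [hl] at ihh
      simp only [List.sum_cons]
      omega
  | cons_cons a h ih =>
    rename_i l₁ l₂
    intro hs
    simp only [List.length_cons, List.take_succ_cons, List.sum_cons]
    exact Nat.add_le_add_left (ih hs.of_cons) a

lemma multiset_take_sum_le {s t : Multiset ℕ} (h : t ≤ s) :
    ((Multiset.sort s (· ≤ ·)).take (Multiset.card t)).sum ≤ t.sum := by
  have hsub : List.Sublist (Multiset.sort t (· ≤ ·)) (Multiset.sort s (· ≤ ·)) := by
    apply List.sublist_of_subperm_of_pairwise _ (Multiset.pairwise_sort _ _)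
      (Multiset.pairwise_sort _ _)
    rw [← Multiset.coe_le, Multiset.sort_eq, Multiset.sort_eq]
    exact h
  have hlen : (Multiset.sort t (· ≤ ·)).length = Multiset.card t := by
    rw [← Multiset.coe_card, Multiset.sort_eq]
  have hsum : (Multiset.sort t (· ≤ ·)).sum = t.sum := by
    rw [← Multiset.sum_coe, Multiset.sort_eq]
  rw [← hlen, ← hsum]
  exact take_sum_le_of_sublist hsub (Multiset.pairwise_sort _ _)

lemma take_sum_mono {l : List ℕ} {m n : ℕ} (h : m ≤ n) :
    (l.take m).sum ≤ (l.take n).sum := by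
  have hmm : l.take m = (l.take n).take m := by rw [List.take_take, min_eq_left h]
  rw [hmm]
  conv_rhs => rw [← List.take_append_drop m (l.take n)]
  rw [List.sum_append]
  exact Nat.le_add_right _ _

lemma sep_of_cond {V : Type*} {w b : V → ℕ} {GB : ℕ} {u v : V}
    (hcond : ∀ s ∈ Finset.Icc (b u) (b u + w u - 1), ∀ t ∈ Finset.Icc (b v) (b v + w v - 1),
      (GB : ℤ) ≤ |(s : ℤ) - (t : ℤ)| - 1)
    (hwu : 1 ≤ w u) (hwv : 1 ≤ w v) (hle : b u ≤ b v) :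
    b u + w u + GB ≤ b v := by
  by_contra hlt
  push_neg at hlt
  set s := min (b u + w u - 1) (b v) with hs
  have hsmem : s ∈ Finset.Icc (b u) (b u + w u - 1) := by
    rw [Finset.mem_Icc]
    omega
  have htmem : b v ∈ Finset.Icc (b v) (b v + w v - 1) := by
    rw [Finset.mem_Icc]
    omega
  have key := hcond s hsmem (b v) htmem
  have h1 : s ≤ b v := min_le_right _ _
  have h2 : b v ≤ s + GB := by omega
  rcases le_abs.mp (by linarith : (GB : ℤ) + 1 ≤ |(s : ℤ) - (b v : ℤ)|) with h' | h' <;> omega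

lemma adj_compare {V : Type*} {G : SimpleGraph V} {w b : V → ℕ} {GB : ℕ}
    (hp : IsProperAssign G w GB b) (hw : ∀ v, 1 ≤ w v) {u v : V} (hadj : G.Adj u v) :
    b u + w u + GB ≤ b v ∨ b v + w v + GB ≤ b u := by
  rcases le_total (b u) (b v) with hle | hle
  · exact Or.inl (sep_of_cond (hp.2 u v hadj) (hw u) (hw v) hle)
  · exact Or.inr (sep_of_cond (hp.2 v u hadj.symm) (hw v) (hw u) hle)

lemma chi_le_sup_height {V : Type*} [Fintype V] [Nonempty V] {G : SimpleGraph V}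
    {w b : V → ℕ} {GB : ℕ} (hp : IsProperAssign G w GB b) (hw : ∀ v, 1 ≤ w v)
    {χ : ℕ} (hχ : G.chromaticNumber = (χ : ℕ∞)) :
    χ ≤ Finset.univ.sup (height w b GB hw) := by
  set N := Finset.univ.sup (height w b GB hw) with hN
  have hle : ∀ v, height w b GB hw v ≤ N := fun v =>
    Finset.le_sup (Finset.mem_univ v)
  have hcol : G.Colorable N := by
    refine ⟨SimpleGraph.Coloring.mk
      (fun v => (⟨height w b GB hw v - 1, by
        have h1 := height_pos w b GB hw v
        have h2 := hle v
        omega⟩ : Fin N)) ?_⟩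
    intro u v hadj hEq
    have hEq' : height w b GB hw u - 1 = height w b GB hw v - 1 := congrArg Fin.val hEq
    have h1 := height_pos w b GB hw u
    have h2 := height_pos w b GB hw v
    rcases adj_compare hp hw hadj with h | h
    · have := height_lt w b GB hw h; omega
    · have := height_lt w b GB hw h; omega
  have := hcol.chromaticNumber_le
  rw [hχ] at this
  exact_mod_cast this

lemma exists_proper {V : Type*} [Fintype V] (G : SimpleGraph V) (w : V → ℕ) (GB : ℕ) :
    IsProperAssign G w GB
      (fun v => 1 + (Fintype.equivFin V v : ℕ) * (Finset.univ.sup w + GB)) := by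
  set e := Fintype.equivFin V
  set K := Finset.univ.sup w + GB with hK
  constructor
  · intro v; exact Nat.le_add_right 1 _
  · have main : ∀ u v : V, (e u : ℕ) < (e v : ℕ) →
        ∀ s ∈ Finset.Icc (1 + (e u : ℕ) * K) (1 + (e u : ℕ) * K + w u - 1),
        ∀ t ∈ Finset.Icc (1 + (e v : ℕ) * K) (1 + (e v : ℕ) * K + w v - 1),
        s + GB + 1 ≤ t := by
      intro u v hlt s hsm t htm
      rw [Finset.mem_Icc] at hsm htm
      have hwu : w u ≤ Finset.univ.sup w := Finset.le_sup (Finset.mem_univ u)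
      have hstep : ((e u : ℕ) + 1) * K ≤ (e v : ℕ) * K :=
        Nat.mul_le_mul_right K (by omega)
      have hsucc : ((e u : ℕ) + 1) * K = (e u : ℕ) * K + K := by ring
      omega
    intro u v hadj s hsm t htm
    have hne : (e u : ℕ) ≠ (e v : ℕ) := by
      intro hcontr
      exact hadj.ne (e.injective (Fin.val_injective hcontr))
    rcases lt_or_gt_of_ne hne with hlt | hlt
    · have h := main u v hlt s hsm t htm
      have habs : (GB : ℤ) + 1 ≤ |(s : ℤ) - (t : ℤ)| :=
        le_abs.mpr (Or.inr (by omega))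
      linarith
    · have h := main v u hlt t htm s hsm
      have habs : (GB : ℤ) + 1 ≤ |(s : ℤ) - (t : ℤ)| :=
        le_abs.mpr (Or.inl (by omega))
      linarith

/-- The optimal MUFI is at least `(χ(Ĝ) - 1)·GB` plus the sum of the `χ(Ĝ)` smallest
vertex weights. -/
theorem chromatic_lower_le_optMUFI {V : Type*} [Fintype V] [Nonempty V]
    (G : SimpleGraph V) (w : V → ℕ) (hw : ∀ v, 1 ≤ w v) (GB : ℕ)
    (χ : ℕ) (hχ : G.chromaticNumber = (χ : ℕ∞)) :
    (χ - 1) * GB + ((Multiset.sort (Finset.univ.val.map w) (· ≤ ·)).take χ).sum ≤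
      optMUFI G w GB := by
  classical
  apply le_csInf
  · exact ⟨_, _, exists_proper G w GB, rfl⟩
  · rintro m ⟨b, hp, rfl⟩
    have hχN := chi_le_sup_height hp hw hχ
    obtain ⟨v, _, hveq⟩ := Finset.exists_mem_eq_sup Finset.univ Finset.univ_nonempty
      (height w b GB hw)
    obtain ⟨C, hCle, hCcard, hCsum⟩ := height_chain w b GB hw hp.1 v
    have hχC : χ ≤ C.card := by rw [hCcard, ← hveq]; exact hχN
    -- sum of the |C| smallest weights is at most the total weight of C
    have hsum2 : ((Multiset.sort (Finset.univ.val.map w) (· ≤ ·)).take C.card).sum ≤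
        C.sum w := by
      have hle : (C.val.map w) ≤ (Finset.univ.val.map w) :=
        Multiset.map_le_map (Finset.val_le_iff.mpr (Finset.subset_univ C))
      have := multiset_take_sum_le hle
      simpa [Multiset.card_map] using this
    have hsum1 : ((Multiset.sort (Finset.univ.val.map w) (· ≤ ·)).take χ).sum ≤
        ((Multiset.sort (Finset.univ.val.map w) (· ≤ ·)).take C.card).sum :=
      take_sum_mono hχC
    have hGB : (χ - 1) * GB ≤ (C.card - 1) * GB :=
      Nat.mul_le_mul_right GB (Nat.sub_le_sub_right hχC 1)
    have hfin : b v + w v - 1 ≤ MUFI w b := by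
      exact Finset.le_sup (f := fun v => b v + w v - 1) (Finset.mem_univ v)
    calc (χ - 1) * GB + ((Multiset.sort (Finset.univ.val.map w) (· ≤ ·)).take χ).sum
        ≤ (C.card - 1) * GB + C.sum w :=
          Nat.add_le_add hGB (le_trans hsum1 hsum2)
      _ ≤ b v + w v - 1 := by omega
      _ ≤ MUFI w b := hfin
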